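/- Let K be a field and n ≥ 1 an integer. Then for every proper two-sided ideal I of the matrix ring M_n(K[T,T⁻¹]) there exists a sequence (A_m)_{m∈ℕ} of two-sided ideals of M_n(K[T,T⁻¹]) such that ⋂_{m∈ℕ} A_m ⊆ I and A_m ⊄ I for every m; in particular, no proper two-sided ideal of M_n(K[T,T⁻¹]) is strongly prime. -/

import Mathlib

open Polynomial LaurentPolynomial

private lemma aux_coeff_zero {K : Type*} [Field K] (g : K[X]) (m : ℕ) :
    (g * X ^ (m + 1) + 1).coeff 0 = 1 := by
  rw [coeff_add, coeff_mul_X_pow', coeff_one]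
  simp

private lemma aux_dvd {K : Type*} [Field K] {q p : K[X]} (hq : ¬ (X ∣ q)) (hp : p ≠ 0)
    (h : (q.toLaurent : LaurentPolynomial K) ∣ p.toLaurent) : q ∣ p := by
  obtain ⟨y, hy⟩ := h
  obtain ⟨M, r, hr⟩ := y.exists_T_pow
  have key : p * X ^ M = q * r := by
    apply Polynomial.toLaurent_injective
    rw [map_mul, map_mul, toLaurent_X_pow, hr, hy]
    ring
  have hcop : IsCoprime q ((X : K[X]) ^ M) :=
    (irreducible_X.coprime_iff_not_dvd.mpr hq).symm.pow_right
  exact hcop.dvd_of_dvd_mul_right ⟨r, key⟩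

private lemma aux_zero {K : Type*} [Field K] {g : K[X]} (hg : g ≠ 0) {x : LaurentPolynomial K}
    (hx : ∀ m : ℕ, (g * X ^ (m + 1) + 1).toLaurent ∣ x) : x = 0 := by
  by_contra hx0
  obtain ⟨L, p, hp⟩ := x.exists_T_pow
  have hpne : p ≠ 0 := by
    rintro rfl
    apply hx0
    have h2 : x * T (L : ℤ) * T (-(L : ℤ)) = 0 := by rw [← hp]; simp
    rwa [mul_T_assoc, add_neg_cancel, T_zero, mul_one] at h2
  have hub : ∀ m : ℕ, m + 1 ≤ p.natDegree := by
    intro m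
    have hq0 : ¬ (X ∣ g * X ^ (m + 1) + 1) := by
      rw [X_dvd_iff, aux_coeff_zero]; exact one_ne_zero
    have hdq : (g * X ^ (m + 1) + 1).toLaurent ∣ p.toLaurent := by
      rw [hp]; exact (hx m).mul_right _
    have hqp : g * X ^ (m + 1) + 1 ∣ p := aux_dvd hq0 hpne hdq
    have hdeg : g.natDegree + (m + 1) ≤ (g * X ^ (m + 1) + 1).natDegree := by
      apply le_natDegree_of_ne_zero
      rw [coeff_add, coeff_mul_X_pow, coeff_one, if_neg (by omega), add_zero]
      simpa using leadingCoeff_ne_zero.mpr hg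
    calc m + 1 ≤ (g * X ^ (m + 1) + 1).natDegree := le_trans (by omega) hdeg
      _ ≤ p.natDegree := natDegree_le_of_dvd hqp hpne
  have := hub p.natDegree
  omega

/-- The two-sided ideal of matrices all of whose entries lie in `Ideal.span {a}`. -/
private def entryIdeal {n : ℕ} {R : Type*} [CommRing R] (a : R) :
    TwoSidedIdeal (Matrix (Fin n) (Fin n) R) :=
  TwoSidedIdeal.mk' {M | ∀ i j, M i j ∈ Ideal.span {a}}
    (fun i j => by simp)
    (fun hx hy i j => by
      rw [Matrix.add_apply]; exact Ideal.add_mem _ (hx i j) (hy i j))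
    (fun hx i j => by
      rw [Matrix.neg_apply]; exact neg_mem (hx i j))
    (fun {x y} hy i j => by
      rw [Matrix.mul_apply]
      exact Ideal.sum_mem _ fun k _ => Ideal.mul_mem_left _ _ (hy k j))
    (fun {x y} hx i j => by
      rw [Matrix.mul_apply]
      exact Ideal.sum_mem _ fun k _ => Ideal.mul_mem_right _ _ (hx i k))

private lemma mem_entryIdeal {n : ℕ} {R : Type*} [CommRing R] {a : R}
    {M : Matrix (Fin n) (Fin n) R} :
    M ∈ (entryIdeal a : TwoSidedIdeal (Matrix (Fin n) (Fin n) R)) ↔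
      ∀ i j, M i j ∈ Ideal.span {a} := by
  exact TwoSidedIdeal.mem_mk' _ _ _ _ _ _ _

private lemma smul_one_mem_entryIdeal {n : ℕ} {R : Type*} [CommRing R] (a : R) :
    a • (1 : Matrix (Fin n) (Fin n) R) ∈ (entryIdeal a : TwoSidedIdeal _) := by
  rw [mem_entryIdeal]
  intro i j
  rw [Matrix.smul_apply, smul_eq_mul]
  exact Ideal.mul_mem_right _ _ (Ideal.mem_span_singleton_self _)

/-- No proper two-sided ideal of the matrix ring `Mₙ(K[T,T⁻¹])` (with `n ≥ 1`)
is strongly prime: every proper two-sided ideal `I` admits a sequence of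
two-sided ideals whose intersection lies in `I` while no member does. -/
theorem stmt_5 {K : Type*} [Field K] (n : ℕ) (hn : 1 ≤ n)
    (I : TwoSidedIdeal (Matrix (Fin n) (Fin n) (LaurentPolynomial K)))
    (hI : I ≠ ⊤) :
    ∃ A : ℕ → TwoSidedIdeal (Matrix (Fin n) (Fin n) (LaurentPolynomial K)),
      (⨅ m, A m) ≤ I ∧ ∀ m, ¬ A m ≤ I := by
  classical
  have key : ∃ g : K[X], g ≠ 0 ∧ ∀ m : ℕ,
      (g * X ^ (m + 1) + 1).toLaurent •
        (1 : Matrix (Fin n) (Fin n) (LaurentPolynomial K)) ∉ I := by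
    by_cases hf : ∃ f : LaurentPolynomial K, f ≠ 0 ∧
        f • (1 : Matrix (Fin n) (Fin n) (LaurentPolynomial K)) ∈ I
    · obtain ⟨f, hf0, hfI⟩ := hf
      obtain ⟨N, g, hg⟩ := f.exists_T_pow
      have hg0 : g ≠ 0 := by
        rintro rfl
        apply hf0
        have h2 : f * T (N : ℤ) * T (-(N : ℤ)) = 0 := by rw [← hg]; simp
        rwa [mul_T_assoc, add_neg_cancel, T_zero, mul_one] at h2
      refine ⟨g, hg0, fun m hm => ?_⟩
      have e1 : ((g * X ^ (m + 1) + 1 : K[X])).toLaurent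
          = f * T ((N : ℤ) + (m + 1 : ℕ)) + 1 := by
        rw [map_add, map_mul, toLaurent_X_pow, toLaurent_one, hg, mul_T_assoc]
      have e2 : (f * T ((N : ℤ) + (m + 1 : ℕ))) •
          (1 : Matrix (Fin n) (Fin n) (LaurentPolynomial K)) ∈ I := by
        have e3 : (f * T ((N : ℤ) + (m + 1 : ℕ))) •
            (1 : Matrix (Fin n) (Fin n) (LaurentPolynomial K))
            = ((T ((N : ℤ) + (m + 1 : ℕ)) : LaurentPolynomial K) •
                (1 : Matrix (Fin n) (Fin n) (LaurentPolynomial K))) * (f • 1) := by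
          rw [smul_mul_assoc, one_mul, smul_smul, mul_comm]
        rw [e3]
        exact I.mul_mem_left _ _ hfI
      rw [e1, add_smul, one_smul] at hm
      have h1 : (1 : Matrix (Fin n) (Fin n) (LaurentPolynomial K)) ∈ I := by
        have := I.sub_mem hm e2
        rwa [add_sub_cancel_left] at this
      exact hI (I.eq_top h1)
    · push_neg at hf
      refine ⟨1, one_ne_zero, fun m hm => ?_⟩
      refine hf _ ?_ hm
      rw [Ne, toLaurent_eq_zero]
      intro h0
      have := aux_coeff_zero (1 : K[X]) m
      rw [h0] at this
      simp at this
  obtain ⟨g, hg0, hkey⟩ := key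
  refine ⟨fun m => entryIdeal ((g * X ^ (m + 1) + 1).toLaurent), ?_, ?_⟩
  · intro x hx
    rw [TwoSidedIdeal.mem_iInf] at hx
    have hx0 : x = 0 := by
      refine Matrix.ext fun i j => ?_
      rw [Matrix.zero_apply]
      apply aux_zero hg0
      intro m
      exact Ideal.mem_span_singleton.mp ((mem_entryIdeal.mp (hx m)) i j)
    rw [hx0]
    exact I.zero_mem
  · intro m hle
    exact hkey m (hle (smul_one_mem_entryIdeal _))
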